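/- Let Γ be a set of positive F₃ s-formulas closed under the F₃ derivability relation with Γ ⋫ C ⇒ E. Then there is a set Δ ⊇ Γ of positive F₃ s-formulas, closed under F₃ derivability, such that Δ ⋫ C ⇒ E and for every A ⇒ B ∈ Δ (with B = B₁ ∨ … ∨ Bₙ) there exists an index i with A ⇒ Bᵢ ∈ Δ. -/

import Mathlib

/-- Propositional formulas over variables `V`. -/
inductive PropForm (V : Type) : Type
  | var : V → PropForm V
  | not : PropForm V → PropForm V
  | and : PropForm V → PropForm V → PropForm V
  | or  : PropForm V → PropForm V → PropForm V
  | imp : PropForm V → PropForm V → PropForm V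

namespace PropForm
def eval {V : Type} (v : V → Bool) : PropForm V → Bool
  | var x => v x
  | not A => !(A.eval v)
  | and A B => A.eval v && B.eval v
  | or A B => A.eval v || B.eval v
  | imp A B => !(A.eval v) || B.eval v
end PropForm

/-- s-formulas: positive `A ⇒ B` or negative `A ⇏ B`. -/
inductive SForm (V : Type) : Type
  | pos : PropForm V → PropForm V → SForm V
  | neg : PropForm V → PropForm V → SForm V

def SForm.IsPos {V : Type} : SForm V → Prop
  | .pos _ _ => True
  | .neg _ _ => False

/-- A frame (set of valuations, nonemptiness required separately) satisfies an s-formula. -/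
def FrameSat {V : Type} (W : Set (V → Bool)) : SForm V → Prop
  | .pos A B => ∀ v ∈ W, A.eval v = true → B.eval v = true
  | .neg A B => ∃ v ∈ W, A.eval v = true ∧ B.eval v = false

/-- Satisfiability of a set of s-formulas by some (nonempty) frame. -/
def SSat {V : Type} (Γ : Set (SForm V)) : Prop :=
  ∃ W : Set (V → Bool), W.Nonempty ∧ ∀ φ ∈ Γ, FrameSat W φ

/-- s-logical consequence `Γ ⊨ₛ α`. -/
def SCons {V : Type} (Γ : Set (SForm V)) (α : SForm V) : Prop :=
  ∀ W : Set (V → Bool), W.Nonempty → (∀ φ ∈ Γ, FrameSat W φ) → FrameSat W α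

/-- `Γ⁺`: the positive s-formulas of `Γ`. -/
def posPart {V : Type} (Γ : Set (SForm V)) : Set (SForm V) :=
  {φ | φ ∈ Γ ∧ ∃ A B, φ = SForm.pos A B}

/-- `Γ⁺_prop`: propositional implications corresponding to the positive s-formulas of `Γ`. -/
def propPart {V : Type} (Γ : Set (SForm V)) : Set (PropForm V) :=
  {C | ∃ A B, SForm.pos A B ∈ Γ ∧ C = PropForm.imp A B}

/-- Classical propositional satisfiability of a set of formulas. -/
def PropSat {V : Type} (S : Set (PropForm V)) : Prop :=
  ∃ v : V → Bool, ∀ C ∈ S, C.eval v = true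

/-- Classical propositional consequence. -/
def PropCons {V : Type} (S : Set (PropForm V)) (C : PropForm V) : Prop :=
  ∀ v : V → Bool, (∀ D ∈ S, D.eval v = true) → C.eval v = true

/-- Conjunction of a nonempty list of variables. -/
def varConj {V : Type} (x : V) (l : List V) : PropForm V :=
  l.foldl (fun acc y => acc.and (.var y)) (.var x)

/-- Disjunction of a nonempty list of variables. -/
def varDisj {V : Type} (x : V) (l : List V) : PropForm V :=
  l.foldl (fun acc y => acc.or (.var y)) (.var x)

/-- Natural deduction for the fragment `F₃`: formulas have a nonempty conjunction of
variables on the left and a nonempty disjunction of variables on the right. -/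
inductive Der3 {V : Type} : Set (SForm V) → SForm V → Prop
  | hyp {Γ : Set (SForm V)} {φ : SForm V} : φ ∈ Γ → Der3 Γ φ
  | ax {Γ : Set (SForm V)} (X : V) : Der3 Γ (SForm.pos (.var X) (.var X))
  | conj1 {Γ : Set (SForm V)} {a : V} {as bs : List V} {y : V} {ys : List V} :
      Der3 Γ (SForm.pos (varConj a as) (varDisj y ys)) →
      Der3 Γ (SForm.pos (varConj a (as ++ bs)) (varDisj y ys))
  | conj2 {Γ : Set (SForm V)} {a b : V} {as bs : List V} {y : V} {ys : List V} :
      Der3 Γ (SForm.pos (varConj a as) (varDisj y ys)) →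
      (∀ z, z ∈ a :: as ↔ z ∈ b :: bs) →
      Der3 Γ (SForm.pos (varConj b bs) (varDisj y ys))
  | trans {Γ : Set (SForm V)} {a : V} {as : List V} {x : V} {bs : List V}
      {z : V} {zs : List V} :
      Der3 Γ (SForm.pos (varConj a as) (.var x)) →
      Der3 Γ (SForm.pos (varConj x bs) (varDisj z zs)) →
      Der3 Γ (SForm.pos (varConj a (as ++ bs)) (varDisj z zs))
  | bot {Γ : Set (SForm V)} {A B : PropForm V} {α : SForm V} :
      Der3 Γ (SForm.pos A B) → Der3 Γ (SForm.neg A B) → Der3 Γ α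
  | neg {Γ : Set (SForm V)} {a c : V} {as cs : List V} {x y : V} {xs ys : List V} :
      Der3 Γ (SForm.neg (varConj c cs) (varDisj y ys)) →
      Der3 (insert (SForm.pos (varConj a as) (varDisj x xs)) Γ)
        (SForm.pos (varConj c cs) (varDisj y ys)) →
      Der3 Γ (SForm.neg (varConj a as) (varDisj x xs))
  | disj1 {Γ : Set (SForm V)} {A : PropForm V} {b d : V} {bs ds : List V} :
      Der3 Γ (SForm.pos A (varDisj b bs)) →
      (∀ z ∈ b :: bs, z ∈ d :: ds) →
      Der3 Γ (SForm.pos A (varDisj d ds))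
  | disj2 {Γ : Set (SForm V)} {a : V} {as : List V} {b : V} {bs : List V}
      {c : V} {cs : List V} {e : V} {es : List V} :
      (∀ φ ∈ Γ, SForm.IsPos φ) →
      Der3 Γ (SForm.pos (varConj a as) (varDisj b bs)) →
      (∀ Bi ∈ b :: bs, Der3 (insert (SForm.pos (varConj a as) (PropForm.var Bi)) Γ)
        (SForm.pos (varConj c cs) (varDisj e es))) →
      Der3 Γ (SForm.pos (varConj c cs) (varDisj e es))

/-- Positive `F₃` s-formulas. -/
def IsPosF3 {V : Type} (φ : SForm V) : Prop :=
  ∃ a as b bs, φ = SForm.pos (varConj a as) (varDisj b bs)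

/-- `F₃` s-formulas. -/
def IsF3 {V : Type} (φ : SForm V) : Prop :=
  ∃ a as b bs, φ = SForm.pos (varConj a as) (varDisj b bs) ∨
    φ = SForm.neg (varConj a as) (varDisj b bs)

lemma der3_mono {V : Type} {Γ : Set (SForm V)} {φ : SForm V} (h : Der3 Γ φ) :
    ∀ Γ' : Set (SForm V), Γ ⊆ Γ' → (∀ ψ ∈ Γ', ψ ∈ Γ ∨ SForm.IsPos ψ) → Der3 Γ' φ := by
  induction h with
  | hyp h => exact fun Γ' hs _ => .hyp (hs h)
  | ax X => exact fun _ _ _ => .ax X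
  | conj1 h ih => exact fun Γ' hs hp => .conj1 (ih Γ' hs hp)
  | conj2 h hperm ih => exact fun Γ' hs hp => .conj2 (ih Γ' hs hp) hperm
  | trans h1 h2 ih1 ih2 => exact fun Γ' hs hp => .trans (ih1 Γ' hs hp) (ih2 Γ' hs hp)
  | bot h1 h2 ih1 ih2 => exact fun Γ' hs hp => .bot (ih1 Γ' hs hp) (ih2 Γ' hs hp)
  | disj1 h hsub ih => exact fun Γ' hs hp => .disj1 (ih Γ' hs hp) hsub
  | neg h1 h2 ih1 ih2 =>
      intro Γ' hs hp
      refine .neg (ih1 Γ' hs hp) (ih2 _ (Set.insert_subset_insert hs) ?_)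
      rintro ψ (rfl | hψ)
      · exact Or.inr trivial
      · rcases hp ψ hψ with h' | h'
        · exact Or.inl (Set.mem_insert_of_mem _ h')
        · exact Or.inr h'
  | disj2 hΓ h hprem ih ihprem =>
      intro Γ' hs hp
      refine .disj2 (fun ψ hψ => ?_) (ih Γ' hs hp) (fun Bi hBi => ?_)
      · rcases hp ψ hψ with h' | h'
        · exact hΓ ψ h'
        · exact h'
      · refine ihprem Bi hBi _ (Set.insert_subset_insert hs) ?_
        rintro ψ (rfl | hψ)
        · exact Or.inr trivial
        · rcases hp ψ hψ with h' | h'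
          · exact Or.inl (Set.mem_insert_of_mem _ h')
          · exact Or.inr h'

lemma der3_cut {V : Type} {φ : SForm V} {Γ₁ : Set (SForm V)} {ψ : SForm V}
    (h : Der3 Γ₁ ψ) :
    ∀ Γ : Set (SForm V), Γ₁ = insert φ Γ → Der3 Γ φ → Der3 Γ ψ := by
  induction h with
  | hyp h =>
      rintro Γ rfl hφ
      rcases h with rfl | h
      · exact hφ
      · exact .hyp h
  | ax X => exact fun _ _ _ => .ax X
  | conj1 h ih => exact fun Γ hΓ hφ => .conj1 (ih Γ hΓ hφ)
  | conj2 h hperm ih => exact fun Γ hΓ hφ => .conj2 (ih Γ hΓ hφ) hperm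
  | trans h1 h2 ih1 ih2 => exact fun Γ hΓ hφ => .trans (ih1 Γ hΓ hφ) (ih2 Γ hΓ hφ)
  | bot h1 h2 ih1 ih2 => exact fun Γ hΓ hφ => .bot (ih1 Γ hΓ hφ) (ih2 Γ hΓ hφ)
  | disj1 h hsub ih => exact fun Γ hΓ hφ => .disj1 (ih Γ hΓ hφ) hsub
  | neg h1 h2 ih1 ih2 =>
      rintro Γ rfl hφ
      refine .neg (ih1 Γ rfl hφ) (ih2 _ (Set.insert_comm _ _ _) ?_)
      exact der3_mono hφ _ (Set.subset_insert _ _)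
        (by rintro ψ (rfl | hψ) ; exacts [Or.inr trivial, Or.inl hψ])
  | disj2 hΓ h hprem ih ihprem =>
      rintro Γ rfl hφ
      refine .disj2 (fun ψ hψ => hΓ ψ (Set.mem_insert_of_mem _ hψ)) (ih Γ rfl hφ)
        (fun Bi hBi => ihprem Bi hBi _ (Set.insert_comm _ _ _) ?_)
      exact der3_mono hφ _ (Set.subset_insert _ _)
        (by rintro ψ (rfl | hψ) ; exacts [Or.inr trivial, Or.inl hψ])

lemma der3_finite {V : Type} {Γ : Set (SForm V)} {ψ : SForm V} (h : Der3 Γ ψ) :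
    (∀ φ ∈ Γ, SForm.IsPos φ) → ∃ Γ₀, Γ₀ ⊆ Γ ∧ Γ₀.Finite ∧ Der3 Γ₀ ψ := by
  induction h with
  | @hyp Γ φ h =>
      exact fun _ => ⟨{φ}, Set.singleton_subset_iff.2 h, Set.finite_singleton _,
        .hyp rfl⟩
  | ax X => exact fun _ => ⟨∅, Set.empty_subset _, Set.finite_empty, .ax X⟩
  | conj1 h ih =>
      intro hp
      obtain ⟨Γ₀, hs, hf, hd⟩ := ih hp
      exact ⟨Γ₀, hs, hf, .conj1 hd⟩
  | conj2 h hperm ih =>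
      intro hp
      obtain ⟨Γ₀, hs, hf, hd⟩ := ih hp
      exact ⟨Γ₀, hs, hf, .conj2 hd hperm⟩
  | disj1 h hsub ih =>
      intro hp
      obtain ⟨Γ₀, hs, hf, hd⟩ := ih hp
      exact ⟨Γ₀, hs, hf, .disj1 hd hsub⟩
  | @trans Γ a as x bsx z zs h1 h2 ih1 ih2 =>
      intro hp
      obtain ⟨Γ₀, hs, hf, hd⟩ := ih1 hp
      obtain ⟨Γ₁, hs', hf', hd'⟩ := ih2 hp
      refine ⟨Γ₀ ∪ Γ₁, Set.union_subset hs hs', hf.union hf', .trans (x := x) ?_ ?_⟩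
      · exact der3_mono hd _ Set.subset_union_left
          (fun ψ hψ => Or.inr (hp ψ ((Set.union_subset hs hs') hψ)))
      · exact der3_mono hd' _ Set.subset_union_right
          (fun ψ hψ => Or.inr (hp ψ ((Set.union_subset hs hs') hψ)))
  | @bot Γ A B α h1 h2 ih1 ih2 =>
      intro hp
      obtain ⟨Γ₀, hs, hf, hd⟩ := ih1 hp
      obtain ⟨Γ₁, hs', hf', hd'⟩ := ih2 hp
      refine ⟨Γ₀ ∪ Γ₁, Set.union_subset hs hs', hf.union hf', .bot (A := A) (B := B) ?_ ?_⟩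
      · exact der3_mono hd _ Set.subset_union_left
          (fun ψ hψ => Or.inr (hp ψ ((Set.union_subset hs hs') hψ)))
      · exact der3_mono hd' _ Set.subset_union_right
          (fun ψ hψ => Or.inr (hp ψ ((Set.union_subset hs hs') hψ)))
  | @neg Γ a c as cs x y xs ys h1 h2 ih1 ih2 =>
      intro hp
      obtain ⟨Γ₀, hs, hf, hd⟩ := ih1 hp
      have hins : ∀ φ ∈ insert (SForm.pos (varConj a as) (varDisj x xs)) Γ, SForm.IsPos φ := by
        rintro φ (rfl | hφ); exacts [trivial, hp φ hφ]
      obtain ⟨Γ₁, hs', hf', hd'⟩ := ih2 hins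
      set p := SForm.pos (varConj a as) (varDisj x xs) with hpdef
      refine ⟨Γ₀ ∪ (Γ₁ \ {p}), ?_, hf.union hf'.diff, ?_⟩
      · refine Set.union_subset (hs.trans (le_refl Γ)) (fun ψ hψ => ?_)
        rcases hs' hψ.1 with rfl | h'
        · exact absurd rfl hψ.2
        · exact h'
      · have hposS : ∀ ψ ∈ Γ₀ ∪ (Γ₁ \ {p}), SForm.IsPos ψ := by
          intro ψ hψ
          rcases hψ with hψ | hψ
          · exact hp ψ (hs hψ)
          · rcases hs' hψ.1 with rfl | h'
            · exact trivial
            · exact hp ψ h'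
        refine .neg (der3_mono hd _ Set.subset_union_left (fun ψ hψ => Or.inr (hposS ψ hψ))) ?_
        refine der3_mono hd' _ ?_ ?_
        · intro ψ hψ
          by_cases hψp : ψ = p
          · subst hψp; exact Set.mem_insert _ _
          · exact Set.mem_insert_of_mem _ (Or.inr ⟨hψ, hψp⟩)
        · rintro ψ (rfl | hψ)
          · exact Or.inr trivial
          · exact Or.inr (hposS ψ hψ)
  | @disj2 Γ a as b bs cc ccs ee ees hΓ h hprem ih ihprem =>
      intro hp
      obtain ⟨Γ₀, hs, hf, hd⟩ := ih hp
      have hins : ∀ Bi, ∀ φ ∈ insert (SForm.pos (varConj a as) (PropForm.var Bi)) Γ,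
          SForm.IsPos φ := by
        rintro Bi φ (rfl | hφ); exacts [trivial, hp φ hφ]
      choose f hf1 hf2 hf3 using fun Bi (hBi : Bi ∈ b :: bs) => ihprem Bi hBi (hins Bi)
      classical
      set g : V → Set (SForm V) := fun Bi =>
        if hBi : Bi ∈ b :: bs then f Bi hBi \ {SForm.pos (varConj a as) (PropForm.var Bi)}
        else ∅ with hg
      set S : Set (SForm V) := Γ₀ ∪ ⋃ Bi ∈ {x | x ∈ b :: bs}, g Bi with hS
      have hgsub : ∀ Bi, g Bi ⊆ Γ := by
        intro Bi ψ hψ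
        simp only [hg] at hψ
        split at hψ
        · rcases hf1 Bi ‹_› hψ.1 with rfl | h'
          · exact absurd rfl hψ.2
          · exact h'
        · exact absurd hψ (Set.notMem_empty ψ)
      have hSsub : S ⊆ Γ := by
        refine Set.union_subset hs ?_
        intro ψ hψ
        simp only [Set.mem_iUnion] at hψ
        obtain ⟨Bi, _, hψ⟩ := hψ
        exact hgsub Bi hψ
      have hSfin : S.Finite := by
        refine hf.union (Set.Finite.biUnion (List.finite_toSet _) (fun Bi hBi => ?_))
        have hBi' : Bi ∈ b :: bs := hBi
        simp only [hg]
        rw [dif_pos hBi']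
        exact (hf2 Bi hBi').diff
      have hSpos : ∀ ψ ∈ S, SForm.IsPos ψ := fun ψ hψ => hp ψ (hSsub hψ)
      refine ⟨S, hSsub, hSfin, ?_⟩
      refine .disj2 hSpos
        (der3_mono hd _ Set.subset_union_left (fun ψ hψ => Or.inr (hSpos ψ hψ)))
        (fun Bi hBi => ?_)
      refine der3_mono (hf3 Bi hBi) _ ?_ ?_
      · intro ψ hψ
        by_cases hψp : ψ = SForm.pos (varConj a as) (PropForm.var Bi)
        · subst hψp; exact Set.mem_insert _ _
        · refine Set.mem_insert_of_mem _ (Or.inr ?_)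
          simp only [Set.mem_iUnion]
          exact ⟨Bi, hBi, by simp only [hg]; rw [dif_pos hBi]; exact ⟨hψ, hψp⟩⟩
      · rintro ψ (rfl | hψ)
        · exact Or.inr trivial
        · rcases hψ with hψ | hψ
          · exact Or.inr (hp ψ (hs hψ))
          · simp only [Set.mem_iUnion] at hψ
            obtain ⟨Bj, _, hψ⟩ := hψ
            exact Or.inr (hp ψ (hgsub Bj hψ))

lemma finite_subset_chain {V : Type} {c : Set (Set (SForm V))}
    (hc : IsChain (· ⊆ ·) c) (hne : c.Nonempty) {t : Set (SForm V)}
    (hfin : t.Finite) : t ⊆ ⋃₀ c → ∃ s ∈ c, t ⊆ s := by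
  refine Set.Finite.induction_on t hfin
    (fun _ => ⟨hne.choose, hne.choose_spec, Set.empty_subset _⟩) ?_
  intro x t hx htfin ih hsub
  obtain ⟨s, hs, hts⟩ := ih (fun y hy => hsub (Set.mem_insert_of_mem _ hy))
  obtain ⟨s', hs', hxs'⟩ := hsub (Set.mem_insert _ _)
  rcases eq_or_ne s s' with rfl | hne'
  · exact ⟨s, hs, Set.insert_subset hxs' hts⟩
  · rcases hc hs hs' hne' with h | h
    · exact ⟨s', hs', Set.insert_subset hxs' (hts.trans h)⟩
    · exact ⟨s, hs, Set.insert_subset (h hxs') hts⟩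

lemma isPosF3_isPos {V : Type} {φ : SForm V} (h : IsPosF3 φ) : SForm.IsPos φ := by
  obtain ⟨a, as, b, bs, rfl⟩ := h; trivial

theorem stmt16 {V : Type} (Γ : Set (SForm V))
    (hpos : ∀ φ ∈ Γ, IsPosF3 φ)
    (hclosed : ∀ φ, IsPosF3 φ → Der3 Γ φ → φ ∈ Γ)
    (c : V) (cs : List V) (e : V) (es : List V)
    (hnd : ¬ Der3 Γ (SForm.pos (varConj c cs) (varDisj e es))) :
    ∃ Δ : Set (SForm V), Γ ⊆ Δ ∧ (∀ φ ∈ Δ, IsPosF3 φ) ∧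
      (∀ φ, IsPosF3 φ → Der3 Δ φ → φ ∈ Δ) ∧
      ¬ Der3 Δ (SForm.pos (varConj c cs) (varDisj e es)) ∧
      (∀ a as b bs, SForm.pos (varConj a as) (varDisj b bs) ∈ Δ →
        ∃ bi ∈ b :: bs, SForm.pos (varConj a as) (PropForm.var bi) ∈ Δ) := by
  classical
  set CE : SForm V := SForm.pos (varConj c cs) (varDisj e es) with hCE
  set P : Set (Set (SForm V)) :=
    {S | Γ ⊆ S ∧ (∀ φ ∈ S, IsPosF3 φ) ∧ ¬ Der3 S CE} with hP
  have hΓP : Γ ∈ P := ⟨le_refl Γ, hpos, hnd⟩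
  have hchain : ∀ C ⊆ P, IsChain (· ⊆ ·) C → C.Nonempty →
      ∃ ub ∈ P, ∀ s ∈ C, s ⊆ ub := by
    intro C hCP hC hCne
    refine ⟨⋃₀ C, ⟨?_, ?_, ?_⟩, fun s hs => Set.subset_sUnion_of_mem hs⟩
    · obtain ⟨s, hs⟩ := hCne
      exact (hCP hs).1.trans (Set.subset_sUnion_of_mem hs)
    · rintro φ ⟨s, hs, hφ⟩
      exact (hCP hs).2.1 φ hφ
    · intro hder
      have hupos : ∀ φ ∈ ⋃₀ C, SForm.IsPos φ := by
        rintro φ ⟨s, hs, hφ⟩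
        exact isPosF3_isPos ((hCP hs).2.1 φ hφ)
      obtain ⟨Γ₀, hΓ₀, hfin, hd⟩ := der3_finite hder hupos
      obtain ⟨s, hs, hsub⟩ := finite_subset_chain hC hCne hfin hΓ₀
      exact (hCP hs).2.2 (der3_mono hd s hsub
        (fun ψ hψ => Or.inr (isPosF3_isPos ((hCP hs).2.1 ψ hψ))))
  obtain ⟨Δ, hΓΔ, hmax⟩ := zorn_subset_nonempty P hchain Γ hΓP
  obtain ⟨hΓΔ', hΔpos, hΔnd⟩ := hmax.prop
  have hclosedΔ : ∀ φ, IsPosF3 φ → Der3 Δ φ → φ ∈ Δ := by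
    intro φ hφpos hφder
    have hmem : insert φ Δ ∈ P := by
      refine ⟨hΓΔ'.trans (Set.subset_insert _ _), ?_, ?_⟩
      · rintro ψ (rfl | hψ); exacts [hφpos, hΔpos ψ hψ]
      · intro hder
        exact hΔnd (der3_cut hder Δ rfl hφder)
    exact hmax.2 hmem (Set.subset_insert _ _) (Set.mem_insert _ _)
  refine ⟨Δ, hΓΔ, hΔpos, hclosedΔ, hΔnd, ?_⟩
  intro a as b bs hmem
  by_contra hno
  push_neg at hno
  have hprem : ∀ bi ∈ b :: bs,
      Der3 (insert (SForm.pos (varConj a as) (PropForm.var bi)) Δ) CE := by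
    intro bi hbi
    by_contra hder
    have : insert (SForm.pos (varConj a as) (PropForm.var bi)) Δ ∈ P := by
      refine ⟨hΓΔ'.trans (Set.subset_insert _ _), ?_, hder⟩
      rintro ψ (rfl | hψ)
      · exact ⟨a, as, bi, [], rfl⟩
      · exact hΔpos ψ hψ
    exact hno bi hbi (hmax.2 this (Set.subset_insert _ _) (Set.mem_insert _ _))
  exact hΔnd (Der3.disj2 (fun ψ hψ => isPosF3_isPos (hΔpos ψ hψ)) (.hyp hmem) hprem)
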